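/- Let f₁,…,f_n : ℝ → ℝ be convex with bounded nonempty sublevel sets and λᵢ, μᵢ ∈ [0,∞). Define h₁ ≡ 0 and recursively h_i(t) = min_{s∈ℝ} { f_{i−1}(s) + h_{i−1}(s) + λ_{i−1}(s−t)₊ + μ_{i−1}(t−s)₊ } for i = 2,…,n. Then for each i, min_{t∈ℝ} { f_i(t) + h_i(t) } equals the minimum over (x₁,…,x_i) ∈ ℝ^i of Σ_{j=1}^{i} f_j(x_j) + Σ_{j=1}^{i−1} λ_j(x_j − x_{j+1})₊ + Σ_{j=1}^{i−1} μ_j(x_{j+1} − x_j)₊. In particular the optimal value of the full GNIO problem equals min_t { f_n(t) + h_n(t) }. -/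

import Mathlib

open Filter Topology Set

private lemma max_comb {a b u v : ℝ} (ha : 0 ≤ a) (hb : 0 ≤ b) :
    max (a * u + b * v) 0 ≤ a * max u 0 + b * max v 0 := by
  apply max_le
  · gcongr
    · exact le_max_left _ _
    · exact le_max_left _ _
  · positivity

private lemma tendsto_atTop_of_convex (f : ℝ → ℝ) (hf : ConvexOn ℝ Set.univ f)
    (α R x₀ : ℝ) (hx₀ : f x₀ ≤ α) (hR : ∀ x, f x ≤ α → |x| ≤ R) :
    Tendsto f atTop atTop := by
  have hR0 : |x₀| ≤ R := hR x₀ hx₀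
  set y : ℝ := R + 1 with hy
  have hyx₀ : x₀ < y := by
    have := abs_le.1 hR0
    simp only [hy]; linarith [this.2]
  have hfy : α < f y := by
    by_contra hc
    push_neg at hc
    have := hR y hc
    have : |y| = y := abs_of_pos (by nlinarith [abs_nonneg x₀])
    simp only [hy] at *
    nlinarith [hR y hc, abs_nonneg x₀]
  have key : ∀ x, y ≤ x → α + (f y - α) * ((x - x₀) / (y - x₀)) ≤ f x := by
    intro x hx
    have hxx₀ : 0 < x - x₀ := by linarith
    have hyx₀' : 0 < y - x₀ := by linarith
    set θ : ℝ := (y - x₀) / (x - x₀) with hθ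
    have hθ0 : 0 < θ := div_pos hyx₀' hxx₀
    have hθ1 : θ ≤ 1 := (div_le_one hxx₀).2 (by linarith)
    have hcomb := hf.2 (Set.mem_univ x₀) (Set.mem_univ x) (by linarith : (0:ℝ) ≤ 1 - θ)
      hθ0.le (by ring)
    simp only [smul_eq_mul] at hcomb
    have heq : (1 - θ) * x₀ + θ * x = y := by
      have : θ * (x - x₀) = y - x₀ := div_mul_cancel₀ _ hxx₀.ne'
      nlinarith [this]
    rw [heq] at hcomb
    -- f y ≤ (1-θ) f x₀ + θ f x ≤ (1-θ) α + θ f x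
    have h1 : f y ≤ (1 - θ) * α + θ * f x := by nlinarith [hcomb, hx₀, hθ1]
    have h2 : f y - α ≤ θ * (f x - α) := by nlinarith [h1]
    have h3 : (f y - α) / θ ≤ f x - α := by
      rw [div_le_iff₀ hθ0]; linarith [h2, mul_comm θ (f x - α)]
    have h4 : (x - x₀) / (y - x₀) = 1 / θ := by
      rw [hθ, one_div_div]
    rw [h4, mul_one_div]
    linarith
  have hlin : Tendsto (fun x : ℝ => α + (f y - α) * ((x - x₀) / (y - x₀))) atTop atTop := by
    apply tendsto_atTop_add_const_left
    apply Tendsto.const_mul_atTop (by linarith : (0:ℝ) < f y - α)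
    exact Tendsto.atTop_div_const (by linarith) (tendsto_atTop_add_const_right _ _ tendsto_id)
  exact tendsto_atTop_mono' _ (eventually_atTop.2 ⟨y, key⟩) hlin

private lemma coercive_of_convex (f : ℝ → ℝ) (hf : ConvexOn ℝ Set.univ f)
    (hlev : ∃ α : ℝ, {x : ℝ | f x ≤ α}.Nonempty ∧ Bornology.IsBounded {x : ℝ | f x ≤ α}) :
    Tendsto f (cocompact ℝ) atTop := by
  obtain ⟨α, ⟨x₀, hx₀⟩, hbd⟩ := hlev
  obtain ⟨R, hRs⟩ := (Metric.isBounded_iff_subset_closedBall (0:ℝ)).1 hbd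
  have hR : ∀ x, f x ≤ α → |x| ≤ R := by
    intro x hx
    have := hRs hx
    simpa [Real.dist_eq] using this
  rw [cocompact_eq_atBot_atTop, tendsto_sup]
  constructor
  · -- atBot : use g x = f (-x)
    have hg : ConvexOn ℝ Set.univ (fun x => f (-x)) := by
      refine ⟨convex_univ, ?_⟩
      intro x _ y _ a b ha hb hab
      simp only [smul_eq_mul]
      have := hf.2 (Set.mem_univ (-x)) (Set.mem_univ (-y)) ha hb hab
      simp only [smul_eq_mul] at this
      calc f (-(a * x + b * y)) = f (a * -x + b * -y) := by ring_nf
        _ ≤ a * f (-x) + b * f (-y) := this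
    have hgt : Tendsto (fun x => f (-x)) atTop atTop :=
      tendsto_atTop_of_convex _ hg α R (-x₀) (by simpa using hx₀)
        (fun x hx => by simpa [abs_neg] using hR (-x) hx)
    have := hgt.comp tendsto_neg_atBot_atTop
    refine this.congr fun x => by simp
  · exact tendsto_atTop_of_convex f hf α R x₀ hx₀ hR

private lemma exists_isLeast_range (g : ℝ → ℝ) (hc : Continuous g)
    (hcoer : Tendsto g (cocompact ℝ) atTop) : ∃ v : ℝ, IsLeast (Set.range g) v := by
  obtain ⟨x, hx⟩ := hc.exists_forall_le hcoer
  exact ⟨g x, Set.mem_range_self x, by rintro _ ⟨y, rfl⟩; exact hx y⟩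

theorem stmt_17 (n : ℕ) (hn : 1 ≤ n) (f : ℕ → ℝ → ℝ)
    (hfconv : ∀ i, ConvexOn ℝ Set.univ (f i))
    (hflev : ∀ i, ∃ α : ℝ,
      {x : ℝ | f i x ≤ α}.Nonempty ∧ Bornology.IsBounded {x : ℝ | f i x ≤ α})
    (lam mu : ℕ → ℝ) (hlam : ∀ i, 0 ≤ lam i) (hmu : ∀ i, 0 ≤ mu i)
    (h : ℕ → ℝ → ℝ) (hh1 : ∀ t : ℝ, h 1 t = 0)
    (hhrec : ∀ i, 2 ≤ i → i ≤ n → ∀ t : ℝ,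
      IsLeast (Set.range fun s : ℝ =>
          f (i - 1) s + h (i - 1) s + lam (i - 1) * max (s - t) 0 + mu (i - 1) * max (t - s) 0)
        (h i t)) :
    ∀ i, 1 ≤ i → i ≤ n → ∃ v : ℝ,
      IsLeast (Set.range fun t : ℝ => f i t + h i t) v ∧
      IsLeast {w : ℝ | ∃ x : ℕ → ℝ,
          w = (∑ j ∈ Finset.Icc 1 i, f j (x j)) +
              ∑ j ∈ Finset.Icc 1 (i - 1),
                (lam j * max (x j - x (j + 1)) 0 + mu j * max (x (j + 1) - x j) 0)} v := by
  -- continuity of all f i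
  have hfcont : ∀ i, Continuous (f i) := fun i => (hfconv i).locallyLipschitz.continuous
  have hfcoer : ∀ i, Tendsto (f i) (cocompact ℝ) atTop :=
    fun i => coercive_of_convex (f i) (hfconv i) (hflev i)
  -- Part 1 : convexity of h i and existence of a least value of f i + h i
  have key : ∀ i, 1 ≤ i → i ≤ n →
      ConvexOn ℝ Set.univ (h i) ∧ ∃ v : ℝ, IsLeast (Set.range fun t : ℝ => f i t + h i t) v := by
    intro i hi1
    induction i, hi1 using Nat.le_induction with
    | base =>
      intro _
      have hconv : ConvexOn ℝ Set.univ (h 1) := by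
        refine ⟨convex_univ, ?_⟩
        intro x _ y _ a b ha hb hab
        simp [hh1, smul_eq_mul]
      refine ⟨hconv, ?_⟩
      have he : (fun t : ℝ => f 1 t + h 1 t) = f 1 := by
        funext t; rw [hh1]; ring
      rw [he]
      exact exists_isLeast_range _ (hfcont 1) (hfcoer 1)
    | succ i hi IH =>
      intro hin
      obtain ⟨hconv_i, v, hv⟩ := IH (by omega)
      have hgconv : ConvexOn ℝ Set.univ (fun t => f i t + h i t) := (hfconv i).add hconv_i
      have hrec := hhrec (i + 1) (by omega) hin
      simp only [Nat.add_sub_cancel] at hrec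
      -- convexity of h (i+1)
      have hconv : ConvexOn ℝ Set.univ (h (i + 1)) := by
        refine ⟨convex_univ, ?_⟩
        intro t₁ _ t₂ _ a b ha hb hab
        simp only [smul_eq_mul]
        obtain ⟨s₁, hs₁⟩ := (hrec t₁).1
        obtain ⟨s₂, hs₂⟩ := (hrec t₂).1
        have hs₁' : f i s₁ + h i s₁ + lam i * max (s₁ - t₁) 0 + mu i * max (t₁ - s₁) 0
            = h (i + 1) t₁ := hs₁
        have hs₂' : f i s₂ + h i s₂ + lam i * max (s₂ - t₂) 0 + mu i * max (t₂ - s₂) 0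
            = h (i + 1) t₂ := hs₂
        have hub := (hrec (a * t₁ + b * t₂)).2
          (Set.mem_range_self (a * s₁ + b * s₂))
        refine hub.trans ?_
        have hg := hgconv.2 (Set.mem_univ s₁) (Set.mem_univ s₂) ha hb hab
        simp only [smul_eq_mul] at hg
        have hmax1 : max (a * s₁ + b * s₂ - (a * t₁ + b * t₂)) 0
            ≤ a * max (s₁ - t₁) 0 + b * max (s₂ - t₂) 0 := by
          have := max_comb (u := s₁ - t₁) (v := s₂ - t₂) ha hb
          calc max (a * s₁ + b * s₂ - (a * t₁ + b * t₂)) 0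
              = max (a * (s₁ - t₁) + b * (s₂ - t₂)) 0 := by ring_nf
            _ ≤ _ := this
        have hmax2 : max (a * t₁ + b * t₂ - (a * s₁ + b * s₂)) 0
            ≤ a * max (t₁ - s₁) 0 + b * max (t₂ - s₂) 0 := by
          have := max_comb (u := t₁ - s₁) (v := t₂ - s₂) ha hb
          calc max (a * t₁ + b * t₂ - (a * s₁ + b * s₂)) 0
              = max (a * (t₁ - s₁) + b * (t₂ - s₂)) 0 := by ring_nf
            _ ≤ _ := this
        rw [← hs₁', ← hs₂']
        have hl1 : lam i * max (a * s₁ + b * s₂ - (a * t₁ + b * t₂)) 0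
            ≤ lam i * (a * max (s₁ - t₁) 0 + b * max (s₂ - t₂) 0) :=
          mul_le_mul_of_nonneg_left hmax1 (hlam i)
        have hl2 : mu i * max (a * t₁ + b * t₂ - (a * s₁ + b * s₂)) 0
            ≤ mu i * (a * max (t₁ - s₁) 0 + b * max (t₂ - s₂) 0) :=
          mul_le_mul_of_nonneg_left hmax2 (hmu i)
        nlinarith [hg, hl1, hl2, hub]
      refine ⟨hconv, ?_⟩
      -- lower bound for h (i+1)
      have hlb : ∀ t, v ≤ h (i + 1) t := by
        intro t
        obtain ⟨s, hs⟩ := (hrec t).1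
        have hs' : f i s + h i s + lam i * max (s - t) 0 + mu i * max (t - s) 0
            = h (i + 1) t := hs
        have h1 : v ≤ f i s + h i s := hv.2 (Set.mem_range_self s)
        have h2 : 0 ≤ lam i * max (s - t) 0 := mul_nonneg (hlam i) (le_max_right _ _)
        have h3 : 0 ≤ mu i * max (t - s) 0 := mul_nonneg (hmu i) (le_max_right _ _)
        linarith [hs'.symm.le, hs'.le]
      -- continuity of h (i+1)
      have hcont : Continuous (h (i + 1)) := hconv.locallyLipschitz.continuous
      have hgcont : Continuous (fun t => f (i + 1) t + h (i + 1) t) :=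
        (hfcont (i + 1)).add hcont
      have hgcoer : Tendsto (fun t => f (i + 1) t + h (i + 1) t) (cocompact ℝ) atTop := by
        apply tendsto_atTop_mono (fun t => by linarith [hlb t] :
          ∀ t, f (i + 1) t + v ≤ f (i + 1) t + h (i + 1) t)
        exact tendsto_atTop_add_const_right _ v (hfcoer (i + 1))
      exact exists_isLeast_range _ hgcont hgcoer
  -- Part 2 : the dynamic-programming identity with fixed last coordinate
  have Qlem : ∀ i, 1 ≤ i → i ≤ n → ∀ t : ℝ,
      IsLeast {w : ℝ | ∃ x : ℕ → ℝ, x i = t ∧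
          w = (∑ j ∈ Finset.Icc 1 i, f j (x j)) +
              ∑ j ∈ Finset.Icc 1 (i - 1),
                (lam j * max (x j - x (j + 1)) 0 + mu j * max (x (j + 1) - x j) 0)}
        (f i t + h i t) := by
    intro i hi1
    induction i, hi1 using Nat.le_induction with
    | base =>
      intro _ t
      constructor
      · refine ⟨fun _ => t, rfl, ?_⟩
        simp [hh1]
      · rintro w ⟨x, hx1, rfl⟩
        simp [hh1, hx1]
    | succ i hi IH =>
      intro hin t
      have IH' := IH (by omega)
      have hrec := hhrec (i + 1) (by omega) hin
      simp only [Nat.add_sub_cancel] at hrec ⊢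
      -- i = k + 1 for some k
      obtain ⟨k, rfl⟩ : ∃ k, i = k + 1 := ⟨i - 1, by omega⟩
      simp only [Nat.add_sub_cancel] at IH'
      constructor
      · -- membership
        obtain ⟨s, hs⟩ := (hrec t).1
        obtain ⟨x, hxi, hxw⟩ := (IH' s).1
        set x' : ℕ → ℝ := Function.update x (k + 1 + 1) t with hx'
        have hx'top : x' (k + 1 + 1) = t := Function.update_self _ _ _
        have hx'eq : ∀ j, j ≤ k + 1 → x' j = x j := by
          intro j hj
          exact Function.update_of_ne (by omega) _ _
        refine ⟨x', hx'top, ?_⟩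
        have hsum1 : (∑ j ∈ Finset.Icc 1 (k + 1 + 1), f j (x' j))
            = (∑ j ∈ Finset.Icc 1 (k + 1), f j (x j)) + f (k + 1 + 1) t := by
          rw [Finset.sum_Icc_succ_top (by omega : 1 ≤ k + 1 + 1), hx'top]
          congr 1
          exact Finset.sum_congr rfl fun j hj => by
            rw [hx'eq j (Finset.mem_Icc.1 hj).2]
        have hsum2 : (∑ j ∈ Finset.Icc 1 (k + 1),
              (lam j * max (x' j - x' (j + 1)) 0 + mu j * max (x' (j + 1) - x' j) 0))
            = (∑ j ∈ Finset.Icc 1 k,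
                (lam j * max (x j - x (j + 1)) 0 + mu j * max (x (j + 1) - x j) 0))
              + (lam (k + 1) * max (s - t) 0 + mu (k + 1) * max (t - s) 0) := by
          rw [Finset.sum_Icc_succ_top (by omega : 1 ≤ k + 1)]
          congr 1
          · exact Finset.sum_congr rfl fun j hj => by
              have hj' := (Finset.mem_Icc.1 hj).2
              rw [hx'eq j (by omega), hx'eq (j + 1) (by omega)]
          · have e1 : x' (k + 1 + 1) = t := hx'top
            have e2 : x' (k + 1) = s := by rw [hx'eq (k + 1) (by omega), hxi]
            rw [e1, e2]
        have hs' : f (k + 1) s + h (k + 1) s + lam (k + 1) * max (s - t) 0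
            + mu (k + 1) * max (t - s) 0 = h (k + 1 + 1) t := hs
        rw [hsum1, hsum2]
        linarith [hs', hxw]
      · -- lower bound
        rintro w ⟨x, hxt, rfl⟩
        have hWlb : f (k + 1) (x (k + 1)) + h (k + 1) (x (k + 1))
            ≤ (∑ j ∈ Finset.Icc 1 (k + 1), f j (x j)) +
              ∑ j ∈ Finset.Icc 1 k,
                (lam j * max (x j - x (j + 1)) 0 + mu j * max (x (j + 1) - x j) 0) :=
          (IH' (x (k + 1))).2 ⟨x, rfl, rfl⟩
        have hhub : h (k + 1 + 1) t ≤ f (k + 1) (x (k + 1)) + h (k + 1) (x (k + 1))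
            + lam (k + 1) * max (x (k + 1) - t) 0 + mu (k + 1) * max (t - x (k + 1)) 0 :=
          (hrec t).2 (Set.mem_range_self (x (k + 1)))
        have hsum1 : (∑ j ∈ Finset.Icc 1 (k + 1 + 1), f j (x j))
            = (∑ j ∈ Finset.Icc 1 (k + 1), f j (x j)) + f (k + 1 + 1) (x (k + 1 + 1)) :=
          Finset.sum_Icc_succ_top (by omega : 1 ≤ k + 1 + 1) _
        have hsum2 : (∑ j ∈ Finset.Icc 1 (k + 1),
              (lam j * max (x j - x (j + 1)) 0 + mu j * max (x (j + 1) - x j) 0))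
            = (∑ j ∈ Finset.Icc 1 k,
                (lam j * max (x j - x (j + 1)) 0 + mu j * max (x (j + 1) - x j) 0))
              + (lam (k + 1) * max (x (k + 1) - x (k + 1 + 1)) 0
                 + mu (k + 1) * max (x (k + 1 + 1) - x (k + 1)) 0) :=
          Finset.sum_Icc_succ_top (by omega : 1 ≤ k + 1) _
        rw [hsum1, hsum2, hxt] at *
        linarith [hWlb, hhub]
  -- combine
  intro i hi1 hin
  obtain ⟨_, v, hv⟩ := key i hi1 hin
  refine ⟨v, hv, ?_, ?_⟩
  · -- membership
    obtain ⟨t, ht⟩ := hv.1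
    obtain ⟨x, _, hxw⟩ := (Qlem i hi1 hin t).1
    exact ⟨x, by rw [← ht]; exact hxw⟩
  · -- lower bound
    rintro w ⟨x, rfl⟩
    have h1 := (Qlem i hi1 hin (x i)).2 ⟨x, rfl, rfl⟩
    have h2 : v ≤ f i (x i) + h i (x i) := hv.2 (Set.mem_range_self (x i))
    linarith
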